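/- If Y is a separable metrizable space and Ȳ is a compact Hausdorff compactification of Y such that Z = Ȳ \ Y is a Z-set in Ȳ (witnessed by a homotopy H with H₀ = id and H_t(Ȳ) ⊆ Y for t > 0), then Ȳ is metrizable and separable. -/

import Mathlib

set_option synthInstance.maxHeartbeats 1000000
set_option maxHeartbeats 1000000


open unitInterval

/-- If `Ȳ` is a compact Hausdorff compactification of a separable metrizable space `Y`
(i.e. `Y` is dense in `Ȳ`) and `Z = Ȳ \ Y` is a Z-set in `Ȳ` (witnessed by a homotopy
`H` with `H₀ = id` and `H_t(Ȳ) ⊆ Y` for `t > 0`), then `Ȳ` is metrizable and separable. -/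
theorem stmt5 (Ybar : Type*) [TopologicalSpace Ybar] [CompactSpace Ybar] [T2Space Ybar]
    (Y : Set Ybar) (hdense : Dense Y)
    (hmet : TopologicalSpace.MetrizableSpace Y)
    (hsep : TopologicalSpace.SeparableSpace Y)
    (H : C(Ybar × I, Ybar))
    (h0 : ∀ y : Ybar, H (y, 0) = y)
    (ht : ∀ (y : Ybar) (t : I), 0 < t → H (y, t) ∈ Y) :
    TopologicalSpace.MetrizableSpace Ybar ∧ TopologicalSpace.SeparableSpace Ybar := by
  letI : MetricSpace Y := TopologicalSpace.metrizableSpaceMetric Y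
  -- the times 1/(n+1) in I
  set u : ℕ → I := fun n => ⟨1 / (n + 1 : ℝ), by
    constructor
    · positivity
    · rw [div_le_one (by positivity)]
      linarith [Nat.cast_nonneg (α := ℝ) n]⟩ with hu
  have hupos : ∀ n, 0 < u n := fun n => by
    rw [← Subtype.coe_lt_coe]
    show (0 : ℝ) < 1 / (n + 1 : ℝ)
    positivity
  -- the maps f n : Ybar → Y
  set f : ℕ → Ybar → Y := fun n x => ⟨H (x, u n), ht x (u n) (hupos n)⟩ with hf
  have hfc : ∀ n, Continuous (f n) := fun n =>
    (H.continuous.comp (continuous_id.prodMk continuous_const)).subtype_mk _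
  -- for each x, f n x → x
  have hlim : ∀ x : Ybar, Filter.Tendsto (fun n => (f n x : Ybar)) Filter.atTop (nhds x) := by
    intro x
    have h1 : Filter.Tendsto u Filter.atTop (nhds (0 : I)) := by
      rw [tendsto_subtype_rng]
      exact tendsto_one_div_add_atTop_nhds_zero_nat
    have h2 : Continuous fun t : I => H (x, t) :=
      H.continuous.comp (continuous_const.prodMk continuous_id)
    have := (h2.tendsto 0).comp h1
    simp only [h0 x] at this
    exact this
  -- evaluation on ℓ^∞ is 1-Lipschitz
  have heval : ∀ k : ℕ, LipschitzWith 1 (fun g : lp (fun _ : ℕ => ℝ) ⊤ => g k) := by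
    intro k
    refine LipschitzWith.of_dist_le_mul fun g₁ g₂ => ?_
    rw [NNReal.coe_one, one_mul, dist_eq_norm, dist_eq_norm]
    have : g₁ k - g₂ k = (g₁ - g₂) k := rfl
    rw [this]
    exact lp.norm_apply_le_norm (by norm_num) (g₁ - g₂) k
  -- the map into a countable product of real lines
  set F : Ybar → (ℕ → ℕ → ℝ) :=
    fun x n k => kuratowskiEmbedding Y (f n x) k with hF
  have hFc : Continuous F :=
    continuous_pi fun n => continuous_pi fun k =>
      (heval k).continuous.comp ((kuratowskiEmbedding.isometry Y).continuous.comp (hfc n))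
  have hFinj : Function.Injective F := by
    intro x y hxy
    have hfn : ∀ n, f n x = f n y := by
      intro n
      refine (kuratowskiEmbedding.isometry Y).injective (lp.ext ?_)
      funext k
      exact congrFun (congrFun hxy n) k
    refine tendsto_nhds_unique (hlim x) ?_
    have : (fun n => (f n x : Ybar)) = fun n => (f n y : Ybar) := by
      funext n; rw [hfn n]
    rw [this]
    exact hlim y
  have hemb := hFc.isClosedEmbedding hFinj
  have hmetr : TopologicalSpace.MetrizableSpace Ybar :=
    hemb.toIsEmbedding.metrizableSpace
  refine ⟨hmetr, ?_⟩
  letI : MetricSpace Ybar := TopologicalSpace.metrizableSpaceMetric Ybar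
  infer_instance
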